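/- For any N×N matrix A over a commutative ring, the polynomial identity z · sum(adj(I - A·z)·A) = sum(adj(I - A·z)) - N · det(I - A·z) holds, where sum denotes the sum of all matrix entries. -/
import Mathlib


open Polynomial Matrix

/-- The sum of all the entries of a matrix. -/
def sumEntries {R : Type*} [AddCommMonoid R] {N : ℕ} (M : Matrix (Fin N) (Fin N) R) : R :=
  ∑ i, ∑ j, M i j

/-- For any `N×N` matrix `A` over a commutative ring,
`z · sum(adj(I - A·z)·A) = sum(adj(I - A·z)) - N · det(I - A·z)`. -/
theorem stmt3 {R : Type*} [CommRing R] {N : ℕ} (A : Matrix (Fin N) (Fin N) R) :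
    (X : R[X]) *
        sumEntries (adjugate ((1 : Matrix (Fin N) (Fin N) R[X]) - (X : R[X]) • A.map C) * A.map C)
      = sumEntries (adjugate ((1 : Matrix (Fin N) (Fin N) R[X]) - (X : R[X]) • A.map C))
        - (N : R[X]) * ((1 : Matrix (Fin N) (Fin N) R[X]) - (X : R[X]) • A.map C).det := by
  set M : Matrix (Fin N) (Fin N) R[X] := 1 - (X : R[X]) • A.map C with hM
  have key : adjugate M * ((X : R[X]) • A.map C) = adjugate M - M.det • 1 := by
    have h1 : (X : R[X]) • A.map C = 1 - M := by rw [hM, sub_sub_cancel]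
    rw [h1, mul_sub, mul_one, adjugate_mul]
  have hsum : ∀ B C' : Matrix (Fin N) (Fin N) R[X],
      sumEntries (B - C') = sumEntries B - sumEntries C' := by
    intro B C'
    simp [sumEntries, Finset.sum_sub_distrib, Matrix.sub_apply]
  calc (X : R[X]) * sumEntries (adjugate M * A.map C)
      = sumEntries (adjugate M * ((X : R[X]) • A.map C)) := by
        simp [sumEntries, Finset.mul_sum, mul_smul_comm]
    _ = sumEntries (adjugate M) - sumEntries (M.det • (1 : Matrix (Fin N) (Fin N) R[X])) := by
        rw [key, hsum]
    _ = sumEntries (adjugate M) - (N : R[X]) * M.det := by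
        congr 1
        simp [sumEntries, Matrix.smul_apply, Matrix.one_apply, mul_comm]
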